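/- Let X = (P,Q) be a C¹ planar vector field, let V : ℝ² → ℝ be a real-analytic function, let s ∈ ℝ, and set M_s = (∂V/∂x)P + (∂V/∂y)Q + s·V·div X. Let W ⊂ ℝ² be an open region on which M_s does not change sign and vanishes only on a set of zero Lebesgue measure. Then every periodic orbit of ẋ = P, ẏ = Q whose image is contained in W is either entirely contained in the set V₀ = {V = 0} or its image is disjoint from V₀. -/

import Mathlib

open MeasureTheory Set

/-- Partial derivative with respect to the first coordinate. -/
noncomputable def pdx (f : ℝ × ℝ → ℝ) (p : ℝ × ℝ) : ℝ := fderiv ℝ f p (1, 0)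

/-- Partial derivative with respect to the second coordinate. -/
noncomputable def pdy (f : ℝ × ℝ → ℝ) (p : ℝ × ℝ) : ℝ := fderiv ℝ f p (0, 1)

/-- `γ` is a solution of the planar system `ẋ = P(x,y), ẏ = Q(x,y)`. -/
def IsSolution (P Q : ℝ × ℝ → ℝ) (γ : ℝ → ℝ × ℝ) : Prop :=
  ∀ t, HasDerivAt γ (P (γ t), Q (γ t)) t

/-- A periodic orbit: a nonconstant periodic solution. -/
def IsPeriodicOrbit (P Q : ℝ × ℝ → ℝ) (γ : ℝ → ℝ × ℝ) : Prop :=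
  IsSolution P Q γ ∧ (∃ T > 0, Function.Periodic γ T) ∧ ¬(∀ t, γ t = γ 0)

/-- A limit cycle: a periodic orbit whose image has a neighborhood containing
the image of no periodic orbit other than itself. -/
def IsLimitCycle (P Q : ℝ × ℝ → ℝ) (γ : ℝ → ℝ × ℝ) : Prop :=
  IsPeriodicOrbit P Q γ ∧
    ∃ U : Set (ℝ × ℝ), IsOpen U ∧ Set.range γ ⊆ U ∧
      ∀ γ' : ℝ → ℝ × ℝ, IsPeriodicOrbit P Q γ' → Set.range γ' ⊆ U →
        Set.range γ' = Set.range γ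

/-- `T` is the minimal (positive) period of `γ`. -/
def IsMinimalPeriod (γ : ℝ → ℝ × ℝ) (T : ℝ) : Prop :=
  0 < T ∧ Function.Periodic γ T ∧ ∀ T', 0 < T' → Function.Periodic γ T' → T ≤ T'

private lemma clm_eval (f : ℝ × ℝ →L[ℝ] ℝ) (a b : ℝ) :
    f (a, b) = a * f (1, 0) + b * f (0, 1) := by
  have h : (a, b) = a • ((1:ℝ), (0:ℝ)) + b • ((0:ℝ), (1:ℝ)) := by simp [Prod.ext_iff]
  rw [h, map_add, f.map_smul, f.map_smul, smul_eq_mul, smul_eq_mul]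

/-- If `M_s` has constant sign on the open region `W` and vanishes
only on a null set, every periodic orbit contained in `W` is either entirely
contained in `{V = 0}` or disjoint from it. -/
theorem stmt3 (P Q : ℝ × ℝ → ℝ) (hP : ContDiff ℝ 1 P) (hQ : ContDiff ℝ 1 Q)
    (V : ℝ × ℝ → ℝ) (hV : AnalyticOnNhd ℝ V Set.univ)
    (s : ℝ) (Ms : ℝ × ℝ → ℝ)
    (hMs : ∀ p, Ms p = pdx V p * P p + pdy V p * Q p + s * V p * (pdx P p + pdy Q p))
    (W : Set (ℝ × ℝ)) (hW : IsOpen W)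
    (hsign : (∀ p ∈ W, 0 ≤ Ms p) ∨ (∀ p ∈ W, Ms p ≤ 0))
    (hmeas : volume {p ∈ W | Ms p = 0} = 0)
    (γ : ℝ → ℝ × ℝ) (hγ : IsPeriodicOrbit P Q γ) (hrange : Set.range γ ⊆ W) :
    Set.range γ ⊆ {p | V p = 0} ∨ Disjoint (Set.range γ) {p | V p = 0} := by
  obtain ⟨hsol, ⟨T, hT, hper⟩, -⟩ := hγ
  have hγdiff : Differentiable ℝ γ := fun t => (hsol t).differentiableAt
  have hγcont : Continuous γ := hγdiff.continuous
  -- divergence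
  set D : ℝ × ℝ → ℝ := fun p => pdx P p + pdy Q p with hD
  have hDcont : Continuous fun t => D (γ t) := by
    have h1 : Continuous fun t => pdx P (γ t) :=
      ((hP.continuous_fderiv one_ne_zero).clm_apply continuous_const).comp hγcont
    have h2 : Continuous fun t => pdy Q (γ t) :=
      ((hQ.continuous_fderiv one_ne_zero).clm_apply continuous_const).comp hγcont
    exact h1.add h2
  -- f = V ∘ γ
  set f : ℝ → ℝ := fun t => V (γ t) with hf
  have hf' : ∀ t, HasDerivAt f (Ms (γ t) - s * f t * D (γ t)) t := by
    intro t
    have hVd : HasFDerivAt V (fderiv ℝ V (γ t)) (γ t) :=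
      ((hV (γ t) trivial).differentiableAt).hasFDerivAt
    have h := hVd.comp_hasDerivAt t (hsol t)
    have heq : fderiv ℝ V (γ t) (P (γ t), Q (γ t))
        = Ms (γ t) - s * f t * D (γ t) := by
      rw [clm_eval, hMs (γ t)]
      simp only [pdx, pdy, hf, hD]
      ring
    rw [heq] at h
    exact h
  have hfper : ∀ (n : ℤ) (t : ℝ), f (t + n * T) = f t := by
    intro n t
    have := (hper.int_mul n) t
    simp only [hf]
    rw [this]
  -- integrating factor
  set S : ℝ → ℝ := fun t => ∫ u in (0:ℝ)..t, s * D (γ u) with hS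
  have hS' : ∀ t, HasDerivAt S (s * D (γ t)) t := fun t =>
    ((hDcont.const_smul s).integral_hasStrictDerivAt 0 t).hasDerivAt
  set g : ℝ → ℝ := fun t => f t * Real.exp (S t) with hg
  have hg' : ∀ t, HasDerivAt g (Ms (γ t) * Real.exp (S t)) t := by
    intro t
    have := (hf' t).mul ((hS' t).exp)
    exact this.congr_deriv (by ring)
  -- key lemma: if f vanishes somewhere, f vanishes everywhere
  have key : (∃ t₀, f t₀ = 0) → ∀ t, f t = 0 := by
    rintro ⟨t₀, ht₀⟩ t
    -- g vanishes on [t₀, t₀ + T]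
    have hzero : ∀ u ∈ Set.Icc t₀ (t₀ + T), g u = 0 := by
      have hgT : g t₀ = 0 ∧ g (t₀ + T) = 0 := by
        constructor
        · simp [hg, ht₀]
        · have : f (t₀ + T) = 0 := by
            have := hfper 1 t₀
            simpa using this.trans ht₀
          simp [hg, this]
      rcases hsign with hpos | hneg
      · have hmono : Monotone g := by
          apply monotone_of_deriv_nonneg (fun u => (hg' u).differentiableAt)
          intro u
          rw [(hg' u).deriv]
          have : 0 ≤ Ms (γ u) := hpos _ (hrange ⟨u, rfl⟩)
          positivity
        intro u hu
        have h1 : g t₀ ≤ g u := hmono hu.1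
        have h2 : g u ≤ g (t₀ + T) := hmono hu.2
        rw [hgT.1] at h1; rw [hgT.2] at h2; linarith
      · have hmono : Antitone g := by
          apply antitone_of_deriv_nonpos (fun u => (hg' u).differentiableAt)
          intro u
          rw [(hg' u).deriv]
          have : Ms (γ u) ≤ 0 := hneg _ (hrange ⟨u, rfl⟩)
          have := Real.exp_pos (S u)
          nlinarith
        intro u hu
        have h1 : g u ≤ g t₀ := hmono hu.1
        have h2 : g (t₀ + T) ≤ g u := hmono hu.2
        rw [hgT.1] at h1; rw [hgT.2] at h2; linarith
    have hfzero : ∀ u ∈ Set.Icc t₀ (t₀ + T), f u = 0 := by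
      intro u hu
      have := hzero u hu
      have hexp := Real.exp_ne_zero (S u)
      simp only [hg, mul_eq_zero] at this
      tauto
    -- shift t into [t₀, t₀ + T]
    set n : ℤ := ⌈(t₀ - t) / T⌉ with hn
    have h1 : (t₀ - t) / T ≤ (n : ℝ) := Int.le_ceil _
    have h2 : (n : ℝ) < (t₀ - t) / T + 1 := Int.ceil_lt_add_one _
    have hmem : t + n * T ∈ Set.Icc t₀ (t₀ + T) := by
      constructor
      · have := (div_le_iff₀ hT).mp h1
        linarith
      · have : (n : ℝ) * T < ((t₀ - t) / T + 1) * T := by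
          exact mul_lt_mul_of_pos_right h2 hT
        rw [add_mul, div_mul_cancel₀ _ (ne_of_gt hT)] at this
        linarith
    have := hfzero _ hmem
    rwa [hfper n t] at this
  by_cases hz : ∃ t₀, f t₀ = 0
  · left
    rintro p ⟨t, rfl⟩
    exact key hz t
  · right
    rw [Set.disjoint_left]
    rintro p ⟨t, rfl⟩ hp
    exact hz ⟨t, hp⟩
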